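/- Let R = ⋃_{i=1}^r R_i be a finite union of disjoint bounded open intervals in [0,∞), A a measurable set with 0 < ε(A) = ess sup_ω μ_ω(A), and define p_i = max{k ≥ 1 : T_ω^k(A) ≤ inf R_i}, q_i = max{k ≥ 1 : T_ω^k(A) ≤ sup R_i} − p_i, where T_ω^k(A) = ∑_{j=1}^k μ_{θ^j ω}(A). Then for P-a.e. ω, | E_{μ_ω}( N_A(ω,·)(R) ) − Leb(R) | ≤ 2 r ε(A), where N_A(ω,x)(R) = ∑_{i=1}^r ∑_{j=p_i+1}^{p_i+q_i} 1_A(f_ω^j x). -/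

import Mathlib

open MeasureTheory

/-- Random composition `f_{θ^{k-1}ω} ∘ ⋯ ∘ f_ω`. -/
def rcomp {Ω X : Type*} (θ : Ω → Ω) (f : Ω → X → X) : ℕ → Ω → X → X
  | 0, _, x => x
  | k + 1, ω, x => rcomp θ f k (θ ω) (f ω x)

lemma rcomp_measurable {Ω X : Type*} [MeasurableSpace X]
    (θ : Ω → Ω) (f : Ω → X → X) (hmf : ∀ ω', Measurable (f ω')) :
    ∀ (j : ℕ) (ω : Ω), Measurable (rcomp θ f j ω)
  | 0, _ => measurable_id
  | k + 1, ω => (rcomp_measurable θ f hmf k (θ ω)).comp (hmf ω)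

theorem stmt_4 {Ω X : Type*} [MeasurableSpace X]
    (θ : Ω → Ω) (f : Ω → X → X) (hmf : ∀ ω', Measurable (f ω'))
    (μ : Ω → Measure X) [∀ ω', IsProbabilityMeasure (μ ω')] (ω : Ω)
    (A : Set X) (hA : MeasurableSet A)
    (r : ℕ) (hr : 1 ≤ r)
    (a b : Fin r → ℝ) (hab : ∀ i, 0 ≤ a i ∧ a i < b i)
    (hdisj : Pairwise fun i j => Disjoint (Set.Ioo (a i) (b i)) (Set.Ioo (a j) (b j)))
    (ε : ℝ) (hεpos : 0 < ε)
    (hεA : ∀ j : ℕ, (μ (θ^[j] ω) A).toReal ≤ ε)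
    (hequiv : ∀ j : ℕ, Measure.map (rcomp θ f j ω) (μ ω) = μ (θ^[j] ω))
    (T : ℕ → ℝ) (hT : ∀ k, T k = ∑ j ∈ Finset.Icc 1 k, (μ (θ^[j] ω) A).toReal)
    (p q : Fin r → ℕ)
    (hp : ∀ i, T (p i) ≤ a i ∧ a i < T (p i + 1))
    (hq : ∀ i, T (p i + q i) ≤ b i ∧ b i < T (p i + q i + 1)) :
    |(∫ x, (∑ i : Fin r, ∑ j ∈ Finset.Icc (p i + 1) (p i + q i),
          Set.indicator A (fun _ => (1:ℝ)) (rcomp θ f j ω x)) ∂(μ ω)) -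
        ∑ i : Fin r, (b i - a i)| ≤ 2 * r * ε := by
  have hmeas : ∀ j : ℕ, Measurable (rcomp θ f j ω) := fun j => rcomp_measurable θ f hmf j ω
  -- rewrite each indicator-composition as indicator of preimage
  have hind : ∀ (j : ℕ) (x : X),
      Set.indicator A (fun _ => (1:ℝ)) (rcomp θ f j ω x)
        = Set.indicator ((rcomp θ f j ω) ⁻¹' A) (fun _ => (1:ℝ)) x := by
    intro j x
    by_cases h : rcomp θ f j ω x ∈ A
    · simp [Set.indicator_apply, h]
    · simp [Set.indicator_apply, h]
  have hint : ∀ j : ℕ,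
      Integrable (fun x => Set.indicator A (fun _ => (1:ℝ)) (rcomp θ f j ω x)) (μ ω) := by
    intro j
    have : Integrable (Set.indicator ((rcomp θ f j ω) ⁻¹' A) (fun _ => (1:ℝ))) (μ ω) :=
      (integrable_const (1:ℝ)).indicator (hmeas j hA)
    exact this.congr (Filter.Eventually.of_forall fun x => (hind j x).symm)
  -- value of each single integral
  have hval : ∀ j : ℕ,
      (∫ x, Set.indicator A (fun _ => (1:ℝ)) (rcomp θ f j ω x) ∂(μ ω))
        = (μ (θ^[j] ω) A).toReal := by
    intro j
    have hm : AEStronglyMeasurable (Set.indicator A (fun _ => (1:ℝ)))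
        (Measure.map (rcomp θ f j ω) (μ ω)) :=
      (measurable_one.indicator hA).aestronglyMeasurable
    rw [show (∫ x, Set.indicator A (fun _ => (1:ℝ)) (rcomp θ f j ω x) ∂(μ ω))
        = ∫ y, Set.indicator A (fun _ => (1:ℝ)) y ∂(Measure.map (rcomp θ f j ω) (μ ω)) from
        (integral_map (hmeas j).aemeasurable hm).symm, hequiv j]
    exact integral_indicator_one (μ := μ (θ^[j] ω)) hA
  -- compute the total integral
  have hTdiff : ∀ i : Fin r,
      (∑ j ∈ Finset.Icc (p i + 1) (p i + q i), (μ (θ^[j] ω) A).toReal)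
        = T (p i + q i) - T (p i) := by
    intro i
    have h0 : ∀ k : ℕ, Finset.Icc (k + 1) (p i + q i) = Finset.Ioc k (p i + q i) := fun k =>
      Finset.Icc_add_one_left_eq_Ioc k _
    have h1 : T (p i) + ∑ j ∈ Finset.Ioc (p i) (p i + q i), (μ (θ^[j] ω) A).toReal
        = T (p i + q i) := by
      rw [hT, hT, show Finset.Icc 1 (p i) = Finset.Ioc 0 (p i) from Finset.Icc_add_one_left_eq_Ioc 0 _,
        show Finset.Icc 1 (p i + q i) = Finset.Ioc 0 (p i + q i) from Finset.Icc_add_one_left_eq_Ioc 0 _]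
      exact Finset.sum_Ioc_consecutive _ (Nat.zero_le _) (Nat.le_add_right _ _)
    rw [h0]
    linarith
  have hIcalc : (∫ x, (∑ i : Fin r, ∑ j ∈ Finset.Icc (p i + 1) (p i + q i),
          Set.indicator A (fun _ => (1:ℝ)) (rcomp θ f j ω x)) ∂(μ ω))
      = ∑ i : Fin r, (T (p i + q i) - T (p i)) := by
    rw [integral_finset_sum _ (fun i _ => integrable_finset_sum _ (fun j _ => hint j))]
    refine Finset.sum_congr rfl fun i _ => ?_
    rw [integral_finset_sum _ (fun j _ => hint j)]
    rw [← hTdiff i]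
    exact Finset.sum_congr rfl fun j _ => hval j
  -- T (k+1) = T k + mass
  have hTsucc : ∀ k : ℕ, T (k + 1) = T k + (μ (θ^[k+1] ω) A).toReal := by
    intro k
    rw [hT, hT, Finset.sum_Icc_succ_top (Nat.succ_le_succ (Nat.zero_le k))]
  -- per-interval bound
  have hbound : ∀ i : Fin r, |(T (p i + q i) - T (p i)) - (b i - a i)| ≤ ε := by
    intro i
    have h1 := hp i
    have h2 := hq i
    have e1 : T (p i + 1) ≤ T (p i) + ε := by
      have := hTsucc (p i); have := hεA (p i + 1); linarith
    have e2 : T (p i + q i + 1) ≤ T (p i + q i) + ε := by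
      have := hTsucc (p i + q i); have := hεA (p i + q i + 1); linarith
    rw [abs_le]
    constructor <;> linarith [h1.1, h1.2, h2.1, h2.2]
  rw [hIcalc, ← Finset.sum_sub_distrib]
  calc |∑ i : Fin r, ((T (p i + q i) - T (p i)) - (b i - a i))|
      ≤ ∑ i : Fin r, |(T (p i + q i) - T (p i)) - (b i - a i)| := Finset.abs_sum_le_sum_abs _ _
    _ ≤ ∑ _i : Fin r, ε := Finset.sum_le_sum fun i _ => hbound i
    _ = r * ε := by simp [Finset.sum_const]
    _ ≤ 2 * r * ε := by nlinarith [hεpos, Nat.one_le_iff_ne_zero.mp hr, (show (1:ℝ) ≤ r by exact_mod_cast hr)]
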